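/- For all distinct a, b ∈ 𝔹², sinh(h(a,b)/2) = √(1−m²) · sinh(ρ(a,b)/2), where m = d({0}, L[a,b]) is the Euclidean distance from the origin to the line through a and b, h is the Hilbert metric and ρ is the hyperbolic metric of the unit disk. -/

import Mathlib

open Complex ComplexConjugate

/-- The line through two points `a`, `b` in the complex plane. -/
noncomputable def lineThrough (a b : ℂ) : Set ℂ :=
  {z : ℂ | ∃ t : ℝ, z = a + (t : ℂ) * (b - a)}

/-- The Hilbert metric of the unit disk: for `a ≠ b`,
`h(a,b) = log (|u-b||a-v| / (|u-a||b-v|))` where `u, v` are the intersection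
points of the line through `a, b` with the unit circle, ordered so that
`|u-a| < |u-b|` (equivalently `|v-b| < |v-a|`). For `a = b` the defining set
is empty and `sSup ∅ = 0`. -/
noncomputable def hilbertDist (a b : ℂ) : ℝ :=
  sSup { d : ℝ | ∃ u v : ℂ, ‖u‖ = 1 ∧ ‖v‖ = 1 ∧
    u ∈ lineThrough a b ∧ v ∈ lineThrough a b ∧
    dist u a < dist u b ∧ dist v b < dist v a ∧
    d = Real.log ((dist u b * dist a v) / (dist u a * dist b v)) }

/-- The hyperbolic (Poincaré) metric of the unit disk, defined by
`sinh (ρ(a,b)/2) = |a-b| / √((1-|a|²)(1-|b|²))`. -/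
noncomputable def rhoDist (a b : ℂ) : ℝ :=
  2 * Real.arsinh (‖a - b‖ /
    Real.sqrt ((1 - ‖a‖ ^ 2) * (1 - ‖b‖ ^ 2)))

/-- The visual angle metric of the unit disk:
`v(a,b) = sup {∠(a,z,b) : z ∈ ∂𝔹²}`. -/
noncomputable def visualAngle (a b : ℂ) : ℝ :=
  sSup { α : ℝ | ∃ z : ℂ, ‖z‖ = 1 ∧ α = EuclideanGeometry.angle a z b }

/-- Euclidean distance from the origin to the line through `a` and `b`. -/
noncomputable def distToLine (a b : ℂ) : ℝ := Metric.infDist 0 (lineThrough a b)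

/-- The Hilbert disk `B_h(z₀, t)`. -/
noncomputable def hilbertBall (z₀ : ℂ) (t : ℝ) : Set ℂ :=
  {z : ℂ | ‖z‖ < 1 ∧ hilbertDist z₀ z < t}

/-- The hyperbolic disk `B_ρ(z₀, t)`. -/
noncomputable def rhoBall (z₀ : ℂ) (t : ℝ) : Set ℂ :=
  {z : ℂ | ‖z‖ < 1 ∧ rhoDist z₀ z < t}

private lemma normSq_line (a b : ℂ) (t : ℝ) :
    Complex.normSq (a + (t:ℂ)*(b-a)) =
      Complex.normSq a + 2*t*(a.re*(b.re-a.re)+a.im*(b.im-a.im)) + t^2*Complex.normSq (b-a) := by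
  simp [Complex.normSq_apply, Complex.mul_re, Complex.mul_im, Complex.sub_re, Complex.sub_im]
  ring

private lemma sinh_half_log (r : ℝ) (hr : 0 < r) :
    Real.sinh (Real.log r / 2) = (r - 1) / (2 * Real.sqrt r) := by
  have hsp : (0:ℝ) < Real.sqrt r := Real.sqrt_pos.mpr hr
  have hs : Real.exp (Real.log r / 2) = Real.sqrt r := by
    rw [← Real.log_sqrt hr.le, Real.exp_log hsp]
  have hn : Real.exp (-(Real.log r / 2)) = (Real.sqrt r)⁻¹ := by rw [Real.exp_neg, hs]
  have h2 : Real.sqrt r * Real.sqrt r = r := Real.mul_self_sqrt hr.le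
  rw [Real.sinh_eq, hs, hn]
  rw [div_eq_div_iff (by norm_num) (by positivity)]
  field_simp
  ring_nf
  rw [Real.sq_sqrt hr.le]

private lemma abs_one_iff (z : ℂ) : ‖z‖ = 1 ↔ Complex.normSq z = 1 := by
  rw [← Complex.sq_norm]
  constructor
  · intro h; rw [h]; norm_num
  · intro h; nlinarith [norm_nonneg z]


set_option maxHeartbeats 1000000 in
/-- Functional identity between the Hilbert and hyperbolic metrics:
`sinh (h(a,b)/2) = √(1-m²) · sinh (ρ(a,b)/2)` with `m = d({0}, L[a,b])`. -/
theorem hilbert_rho_identity (a b : ℂ)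
    (ha : ‖a‖ < 1) (hb : ‖b‖ < 1) (hab : a ≠ b) :
    Real.sinh (hilbertDist a b / 2) =
      Real.sqrt (1 - distToLine a b ^ 2) * Real.sinh (rhoDist a b / 2) := by
  have hba : b - a ≠ 0 := sub_ne_zero.mpr (Ne.symm hab)
  set L2 : ℝ := Complex.normSq (b - a) with hL2def
  have hL2 : 0 < L2 := Complex.normSq_pos.mpr hba
  set B : ℝ := a.re*(b.re-a.re)+a.im*(b.im-a.im) with hBdef
  have hna : Complex.normSq a = ‖a‖ ^ 2 := (Complex.sq_norm a).symm
  have hnb : Complex.normSq b = ‖b‖ ^ 2 := (Complex.sq_norm b).symm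
  set A1 : ℝ := 1 - ‖a‖ ^ 2 with hA1def
  set B1 : ℝ := 1 - ‖b‖ ^ 2 with hB1def
  have hA1 : 0 < A1 := by
    have h0 := norm_nonneg a
    rw [hA1def]; nlinarith
  have hB1 : 0 < B1 := by
    have h0 := norm_nonneg b
    rw [hB1def]; nlinarith
  have hb2 : ‖b‖ ^ 2 = ‖a‖ ^ 2 + 2*B + L2 := by
    have h := normSq_line a b 1
    have e : a + ((1:ℝ):ℂ)*(b-a) = b := by push_cast; ring
    rw [e, ← hBdef, ← hL2def, hna, hnb] at h
    linarith [h]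
  have hb2' : B1 = A1 - 2*B - L2 := by rw [hA1def, hB1def]; linarith [hb2]
  set Δ : ℝ := B^2 + L2*A1 with hDel
  have hΔ : 0 < Δ := by rw [hDel]; nlinarith [sq_nonneg B, mul_pos hL2 hA1]
  set sΔ : ℝ := Real.sqrt Δ with hsDdef
  have hsq' : sΔ^2 = B^2 + L2*A1 := (Real.sq_sqrt hΔ.le).trans hDel
  have hsΔ : 0 < sΔ := Real.sqrt_pos.mpr hΔ
  set t₁ : ℝ := (-B - sΔ)/L2 with ht1def
  set t₂ : ℝ := (-B + sΔ)/L2 with ht2def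
  clear_value L2 B A1 B1 Δ sΔ t₁ t₂
  have hfact : ∀ s : ℝ, L2*s^2 + 2*B*s - A1 = L2*(s - t₁)*(s - t₂) := by
    intro s
    rw [ht1def, ht2def]
    field_simp
    linear_combination hsq'
  have ht1neg : t₁ < 0 := by
    have h1 : -B < sΔ := by nlinarith [hsq', mul_pos hL2 hA1]
    rw [ht1def]
    exact div_neg_of_neg_of_pos (by linarith) hL2
  have ht2gt : 1 < t₂ := by
    have h1 : L2 + B < sΔ := by nlinarith [hsq', mul_pos hL2 hB1, hb2']
    rw [ht2def, lt_div_iff₀ hL2]; linarith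
  set Lr : ℝ := ‖b - a‖ with hLrdef
  have hLrsq : Lr^2 = L2 := by rw [hLrdef, hL2def]; exact Complex.sq_norm _
  have hLrpos : 0 < Lr := norm_pos_iff.mpr hba
  clear_value Lr
  have hrootiff : ∀ t : ℝ, ‖a + (t:ℂ)*(b-a)‖ = 1 ↔ (t = t₁ ∨ t = t₂) := by
    intro t
    rw [abs_one_iff, normSq_line a b t, ← hBdef, ← hL2def]
    constructor
    · intro h1
      have hz : (t - t₁)*(t - t₂) = 0 := by
        have hzz : L2*((t - t₁)*(t - t₂)) = 0 := by
          linear_combination h1 - hfact t - hna - hA1def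
        exact (mul_eq_zero.mp hzz).resolve_left hL2.ne'
      rcases mul_eq_zero.mp hz with h | h
      · exact Or.inl (by linarith [sub_eq_zero.mp h])
      · exact Or.inr (by linarith [sub_eq_zero.mp h])
    · rintro (rfl | rfl)
      · linear_combination hfact t + hna + hA1def
      · linear_combination hfact t + hna + hA1def
  set u : ℂ := a + (t₁:ℂ)*(b-a) with hudef
  set v : ℂ := a + (t₂:ℂ)*(b-a) with hvdef
  clear_value u v
  have habsu : ‖u‖ = 1 := by rw [hudef]; exact (hrootiff t₁).mpr (Or.inl rfl)
  have habsv : ‖v‖ = 1 := by rw [hvdef]; exact (hrootiff t₂).mpr (Or.inr rfl)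
  have hdista : ∀ s : ℝ, dist (a + (s:ℂ)*(b-a)) a = |s| * Lr := by
    intro s
    rw [Complex.dist_eq, show a + (s:ℂ)*(b-a) - a = (s:ℂ)*(b-a) by ring, norm_mul,
      Complex.norm_real, Real.norm_eq_abs, hLrdef]
  have hdistb : ∀ s : ℝ, dist (a + (s:ℂ)*(b-a)) b = |s - 1| * Lr := by
    intro s
    rw [Complex.dist_eq, show a + (s:ℂ)*(b-a) - b = ((s-1:ℝ):ℂ)*(b-a) by push_cast; ring,
      norm_mul, Complex.norm_real, Real.norm_eq_abs, hLrdef]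
  have hdua : dist u a = (-t₁) * Lr := by
    rw [hudef, hdista t₁, abs_of_neg ht1neg]
  have hdub : dist u b = (1 - t₁) * Lr := by
    rw [hudef, hdistb t₁, abs_of_neg (by linarith : t₁ - 1 < 0)]
    ring_nf
  have hdva : dist v a = t₂ * Lr := by
    rw [hvdef, hdista t₂, abs_of_pos (by linarith : (0:ℝ) < t₂)]
  have hdvb : dist v b = (t₂ - 1) * Lr := by
    rw [hvdef, hdistb t₂, abs_of_pos (by linarith : (0:ℝ) < t₂ - 1)]
  set X : ℝ := (1 - t₁) * t₂ with hXdef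
  set Y : ℝ := (-t₁) * (t₂ - 1) with hYdef
  clear_value X Y
  have hX : 0 < X := by rw [hXdef]; exact mul_pos (by linarith) (by linarith)
  have hY : 0 < Y := by rw [hYdef]; exact mul_pos (by linarith) (by linarith)
  have hratio : (dist u b * dist a v) / (dist u a * dist b v) = X / Y := by
    rw [dist_comm a v, dist_comm b v, hdub, hdva, hdua, hdvb]
    rw [show (1 - t₁) * Lr * (t₂ * Lr) = X * Lr^2 by rw [hXdef]; ring,
      show -t₁ * Lr * ((t₂ - 1) * Lr) = Y * Lr^2 by rw [hYdef]; ring,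
      mul_div_mul_right _ _ (pow_ne_zero 2 hLrpos.ne')]
  set D : ℝ := Real.log (X / Y) with hDdef2
  clear_value D
  have hilb : hilbertDist a b = D := by
    have hset : { d : ℝ | ∃ p q : ℂ, ‖p‖ = 1 ∧ ‖q‖ = 1 ∧
        p ∈ lineThrough a b ∧ q ∈ lineThrough a b ∧
        dist p a < dist p b ∧ dist q b < dist q a ∧
        d = Real.log ((dist p b * dist a q) / (dist p a * dist b q)) } = {D} := by
      apply Set.eq_singleton_iff_unique_mem.mpr
      constructor
      · refine ⟨u, v, habsu, habsv, ⟨t₁, hudef⟩, ⟨t₂, hvdef⟩, ?_, ?_, ?_⟩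
        · rw [hdua, hdub]
          exact mul_lt_mul_of_pos_right (by linarith) hLrpos
        · rw [hdvb, hdva]
          exact mul_lt_mul_of_pos_right (by linarith) hLrpos
        · rw [hratio, hDdef2]
      · rintro d ⟨u', v', hu1, hv1, ⟨s, hs⟩, ⟨r, hr⟩, hd1, hd2, rfl⟩
        subst hs; subst hr
        have hs12 : s < 1/2 := by
          rw [hdista s, hdistb s] at hd1
          have h3 : |s| < |s - 1| := lt_of_mul_lt_mul_right hd1 hLrpos.le
          have h4 : s*s < (s-1)*(s-1) := by
            have h5 := mul_self_lt_mul_self (abs_nonneg s) h3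
            rwa [abs_mul_abs_self, abs_mul_abs_self] at h5
          linarith [h4]
        have hr12 : (1:ℝ)/2 < r := by
          rw [hdista r, hdistb r] at hd2
          have h3 : |r - 1| < |r| := lt_of_mul_lt_mul_right hd2 hLrpos.le
          have h4 : (r-1)*(r-1) < r*r := by
            have h5 := mul_self_lt_mul_self (abs_nonneg (r-1)) h3
            rwa [abs_mul_abs_self, abs_mul_abs_self] at h5
          linarith [h4]
        have hseq : s = t₁ := by
          rcases (hrootiff s).mp hu1 with h | h
          · exact h
          · exfalso; rw [h] at hs12; linarith
        have hreq : r = t₂ := by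
          rcases (hrootiff r).mp hv1 with h | h
          · exfalso; rw [h] at hr12; linarith
          · exact h
        subst hseq; subst hreq
        rw [← hudef, ← hvdef, hratio, hDdef2]
    simp only [hilbertDist]
    rw [hset]
    exact csSup_singleton D
  set w : ℂ := a + ((-B/L2 : ℝ):ℂ)*(b-a) with hwdef
  clear_value w
  have hnw : Complex.normSq w = ‖a‖ ^ 2 - B^2/L2 := by
    rw [hwdef, normSq_line, ← hBdef, ← hL2def, hna]
    field_simp
    ring
  have hm : distToLine a b = ‖w‖ := by
    simp only [distToLine]
    apply le_antisymm
    · have hmem : w ∈ lineThrough a b := ⟨-B/L2, hwdef⟩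
      have h := Metric.infDist_le_dist_of_mem (x := (0:ℂ)) hmem
      rwa [dist_comm, Complex.dist_eq, sub_zero] at h
    · by_contra hc
      push_neg at hc
      obtain ⟨z, ⟨t, hz⟩, hdz⟩ :=
        (Metric.infDist_lt_iff (s := lineThrough a b) ⟨w, ⟨-B/L2, hwdef⟩⟩).mp hc
      rw [dist_comm, Complex.dist_eq, sub_zero, hz] at hdz
      have h1 : Complex.normSq (a + (t:ℂ)*(b-a)) < Complex.normSq w := by
        have e1 : ‖a + (t:ℂ)*(b-a)‖ ^ 2 < ‖w‖ ^ 2 :=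
          pow_lt_pow_left₀ hdz (norm_nonneg _) two_ne_zero
        rwa [Complex.sq_norm, Complex.sq_norm] at e1
      rw [normSq_line, ← hBdef, ← hL2def, hnw, hna] at h1
      have h2 : 0 ≤ L2 * (t + B/L2)^2 := by positivity
      have h3 : L2 * (t + B/L2)^2 = 2*t*B + t^2*L2 + B^2/L2 := by field_simp; ring
      linarith only [h1, h2, h3]
  have hm2 : distToLine a b ^ 2 = ‖a‖ ^ 2 - B^2/L2 := by
    rw [hm, Complex.sq_norm, hnw]
  have h1m : 1 - distToLine a b ^ 2 = Δ/L2 := by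
    rw [hm2, hDel]
    field_simp
    linear_combination (-L2) * hA1def
  have hsqL2 : Real.sqrt L2 = Lr := by
    rw [← hLrsq]; exact Real.sqrt_sq hLrpos.le
  have hsqrt1m : Real.sqrt (1 - distToLine a b ^ 2) = sΔ / Lr := by
    rw [h1m, Real.sqrt_div hΔ.le, hsqL2, ← hsDdef]
  have hrho : Real.sinh (rhoDist a b / 2) = Lr / Real.sqrt (A1*B1) := by
    have e : rhoDist a b = 2 * Real.arsinh (Lr / Real.sqrt (A1*B1)) := by
      simp only [rhoDist]
      rw [← hA1def, ← hB1def, norm_sub_rev a b, ← hLrdef]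
    rw [e, show 2 * Real.arsinh (Lr / Real.sqrt (A1*B1)) / 2
      = Real.arsinh (Lr / Real.sqrt (A1*B1)) by ring, Real.sinh_arsinh]
  have hprod1 : (-t₁) * t₂ = A1 / L2 := by
    rw [ht1def, ht2def]
    field_simp
    linear_combination hsq'
  have hprod2 : (1 - t₁) * (t₂ - 1) = B1 / L2 := by
    rw [ht1def, ht2def]
    field_simp
    linear_combination hsq' - L2 * hb2'
  have hXY : X * Y = A1*B1/L2^2 := by
    rw [show X * Y = ((-t₁)*t₂) * ((1-t₁)*(t₂-1)) by rw [hXdef, hYdef]; ring,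
      hprod1, hprod2]
    field_simp
  have hXmY : X - Y = 2*sΔ/L2 := by
    rw [hXdef, hYdef, ht1def, ht2def]; ring
  have hsab : (0:ℝ) < Real.sqrt (A1*B1) := Real.sqrt_pos.mpr (mul_pos hA1 hB1)
  have hsab2 : Real.sqrt (A1*B1) ^ 2 = A1*B1 := Real.sq_sqrt (mul_pos hA1 hB1).le
  have key : (X-Y)^2 * (A1*B1) = 4*Δ*(X*Y) := by
    rw [hXmY, hXY, hDel]
    field_simp
    linear_combination 4 * hsq'
  have hlhs : Real.sinh (D / 2) = sΔ / Real.sqrt (A1*B1) := by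
    rw [hDdef2, sinh_half_log _ (div_pos hX hY)]
    rw [div_eq_div_iff (by positivity) (by positivity)]
    have hXgeY : 0 < X - Y := by rw [hXmY]; positivity
    have hXYge1 : 1 ≤ X/Y := (le_div_iff₀ hY).mpr (by linarith)
    have h1 : 0 ≤ (X/Y - 1) * Real.sqrt (A1*B1) :=
      mul_nonneg (by linarith) (Real.sqrt_nonneg _)
    have h2 : 0 ≤ sΔ * (2*Real.sqrt (X/Y)) := by positivity
    have hmain : ((X/Y - 1) * Real.sqrt (A1*B1))^2 = (sΔ * (2*Real.sqrt (X/Y)))^2 := by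
      rw [mul_pow, mul_pow, hsab2, mul_pow, Real.sq_sqrt (by positivity : (0:ℝ) ≤ X/Y),
        hsq']
      field_simp
      linear_combination key + (4*X*Y) * hDel
    calc (X/Y - 1) * Real.sqrt (A1*B1)
        = Real.sqrt (((X/Y - 1) * Real.sqrt (A1*B1))^2) := (Real.sqrt_sq h1).symm
      _ = Real.sqrt ((sΔ * (2*Real.sqrt (X/Y)))^2) := by rw [hmain]
      _ = sΔ * (2*Real.sqrt (X/Y)) := Real.sqrt_sq h2
  rw [hilb, hlhs, hsqrt1m, hrho]
  rw [div_mul_div_comm]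
  rw [mul_comm Lr (Real.sqrt (A1*B1))]
  rw [mul_div_mul_right _ _ hLrpos.ne']
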